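/- Let R be a commutative ring, e : J ⟶ R an idal of R-modules, and x ∈ Spec R a prime such that the localization e_x : J_x ⟶ R_x is surjective. Then e_x is an isomorphism. Consequently, the set X_J = {x ∈ Spec R : e_x is an isomorphism} equals the complement of V(e(J)), i.e. X_J = {x : e(J) ⊄ x}, and is open in Spec R. -/

import Mathlib

/-- The localization of a linear map `e : J ⟶ R` at a submonoid `S`, as a map
`J_S ⟶ R_S` of localized modules. -/
noncomputable def locMap {R : Type u} [CommRing R] {J : Type u} [AddCommGroup J]
    [Module R J] (S : Submonoid R) (e : J →ₗ[R] R) :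
    LocalizedModule S J →ₗ[R] LocalizedModule S R :=
  IsLocalizedModule.map S (LocalizedModule.mkLinearMap S J)
    (LocalizedModule.mkLinearMap S R) e

theorem mk'_self_eq_one {R : Type u} [CommRing R] (S : Submonoid R) (s : S) :
    IsLocalizedModule.mk' (LocalizedModule.mkLinearMap S R) (s : R) s = 1 := by
  rw [IsLocalizedModule.mk'_eq_iff, Submonoid.smul_def]
  rw [OreLocalization.one_def]
  show LocalizedModule.mk (s : R) 1 = (s : R) • LocalizedModule.mk (1 : R) (1 : S)
  rw [LocalizedModule.smul'_mk, smul_eq_mul, mul_one]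

theorem locMap_one_aux {R : Type u} [CommRing R] {J : Type u} [AddCommGroup J]
    [Module R J] {S : Submonoid R} (e : J →ₗ[R] R) {x : J} {s : S}
    (hu : locMap S e (IsLocalizedModule.mk' (LocalizedModule.mkLinearMap S J) x s) = 1) :
    ∃ c : S, (c : R) * ((s : R) * (s : R)) = (c : R) * ((s : R) * e x) := by
  rw [locMap, IsLocalizedModule.map_mk', ← mk'_self_eq_one S s,
    IsLocalizedModule.mk'_eq_mk'_iff] at hu
  obtain ⟨c, hc⟩ := hu
  simp only [Submonoid.smul_def, smul_eq_mul] at hc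
  exact ⟨c, hc⟩

theorem locMap_surj_iff {R : Type u} [CommRing R] {J : Type u} [AddCommGroup J]
    [Module R J] (e : J →ₗ[R] R) (p : PrimeSpectrum R) :
    Function.Surjective ⇑(locMap p.asIdeal.primeCompl e) ↔
      ¬ LinearMap.range e ≤ p.asIdeal := by
  set S := p.asIdeal.primeCompl
  set fJ := LocalizedModule.mkLinearMap S J
  set fR := LocalizedModule.mkLinearMap S R
  constructor
  · intro hsurj hle
    obtain ⟨u, hu⟩ := hsurj 1
    obtain ⟨⟨x, s⟩, rfl⟩ := IsLocalizedModule.mk'_surjective S fJ u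
    simp only [Function.uncurry_apply_pair] at hu
    obtain ⟨c, hc⟩ := locMap_one_aux e hu
    have hmem : (c : R) * ((s : R) * e x) ∈ p.asIdeal :=
      Ideal.mul_mem_left _ _ (Ideal.mul_mem_left _ _ (hle ⟨x, rfl⟩))
    rw [← hc] at hmem
    exact (c * (s * s)).2 hmem
  · intro hle z
    obtain ⟨a, ⟨x0, hx0⟩, hap⟩ := SetLike.not_le_iff_exists.mp hle
    have haS : a ∈ S := hap
    obtain ⟨⟨r, s⟩, rfl⟩ := IsLocalizedModule.mk'_surjective S fR z
    simp only [Function.uncurry_apply_pair]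
    refine ⟨IsLocalizedModule.mk' fJ (r • x0) (s * ⟨a, haS⟩), ?_⟩
    rw [locMap, IsLocalizedModule.map_mk', IsLocalizedModule.mk'_eq_mk'_iff]
    refine ⟨1, ?_⟩
    simp only [map_smul, hx0, one_smul, Submonoid.smul_def, Submonoid.coe_mul, smul_eq_mul]
    ring

theorem locMap_inj_of_surj {R : Type u} [CommRing R] {J : Type u} [AddCommGroup J]
    [Module R J] (e : J →ₗ[R] R) (hidal : ∀ x y : J, e x • y = e y • x)
    (p : PrimeSpectrum R)
    (hsurj : Function.Surjective ⇑(locMap p.asIdeal.primeCompl e)) :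
    Function.Injective ⇑(locMap p.asIdeal.primeCompl e) := by
  set S := p.asIdeal.primeCompl
  set fJ := LocalizedModule.mkLinearMap S J
  set fR := LocalizedModule.mkLinearMap S R
  obtain ⟨u, hu⟩ := hsurj 1
  obtain ⟨⟨x, s⟩, rfl⟩ := IsLocalizedModule.mk'_surjective S fJ u
  simp only [Function.uncurry_apply_pair] at hu
  obtain ⟨c, hc⟩ := locMap_one_aux e hu
  intro a b hab
  rw [← sub_eq_zero]
  have hzero : locMap S e (a - b) = 0 := by rw [map_sub, hab, sub_self]
  obtain ⟨⟨y, t⟩, hy⟩ := IsLocalizedModule.mk'_surjective S fJ (a - b)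
  simp only [Function.uncurry_apply_pair] at hy
  rw [← hy] at hzero ⊢
  rw [locMap, IsLocalizedModule.map_mk', IsLocalizedModule.mk'_eq_zero'] at hzero
  obtain ⟨s', hs'⟩ := hzero
  rw [Submonoid.smul_def, smul_eq_mul] at hs'
  rw [IsLocalizedModule.mk'_eq_zero']
  -- key computation using the idal identity
  have key : ((s' : R) * ((c : R) * ((s : R) * e x))) • y = 0 := by
    have h1 : e x • y = e y • x := hidal x y
    have h2 : ((s' : R) * ((c : R) * ((s : R) * e x))) • y
        = ((c : R) * (s : R)) • (((s' : R) * e y) • x) := by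
      rw [← smul_smul ((s' : R)) (e y), ← h1]
      simp only [smul_smul]; congr 1; ring
    rw [h2, hs', zero_smul, smul_zero]
  refine ⟨s' * (c * (s * s)), ?_⟩
  rw [Submonoid.smul_def,
    show ((s' * (c * (s * s)) : S) : R) = (s' : R) * ((c : R) * ((s : R) * (s : R))) by
      push_cast; ring,
    hc, key]

/-- Let `e : J ⟶ R` be an idal.  At any prime `p` where the localization `e_p` is
surjective, it is an isomorphism.  Consequently the locus
`X_J = {p : e_p is an isomorphism}` equals the complement of `V(e(J))`, i.e. the set
of primes not containing the image ideal, and is open in `Spec R`. -/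
theorem idal_localization_iso_locus {R : Type u} [CommRing R] {J : Type u}
    [AddCommGroup J] [Module R J] (e : J →ₗ[R] R)
    (hidal : ∀ x y : J, e x • y = e y • x) :
    (∀ p : PrimeSpectrum R,
        Function.Surjective ⇑(locMap p.asIdeal.primeCompl e) →
        Function.Bijective ⇑(locMap p.asIdeal.primeCompl e)) ∧
    {p : PrimeSpectrum R | Function.Bijective ⇑(locMap p.asIdeal.primeCompl e)} =
      {p : PrimeSpectrum R | ¬ LinearMap.range e ≤ p.asIdeal} ∧
    IsOpen {p : PrimeSpectrum R | Function.Bijective ⇑(locMap p.asIdeal.primeCompl e)} := by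
  have h1 : ∀ p : PrimeSpectrum R,
      Function.Surjective ⇑(locMap p.asIdeal.primeCompl e) →
      Function.Bijective ⇑(locMap p.asIdeal.primeCompl e) := fun p hs =>
    ⟨locMap_inj_of_surj e hidal p hs, hs⟩
  have h2 : {p : PrimeSpectrum R | Function.Bijective ⇑(locMap p.asIdeal.primeCompl e)} =
      {p : PrimeSpectrum R | ¬ LinearMap.range e ≤ p.asIdeal} := by
    ext p
    simp only [Set.mem_setOf_eq, ← locMap_surj_iff e p]
    exact ⟨fun h => h.2, h1 p⟩
  refine ⟨h1, h2, ?_⟩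
  rw [h2]
  have : {p : PrimeSpectrum R | ¬ LinearMap.range e ≤ p.asIdeal} =
      (PrimeSpectrum.zeroLocus (LinearMap.range e : Set R))ᶜ := by
    ext p
    simp [PrimeSpectrum.mem_zeroLocus, SetLike.coe_subset_coe]
  rw [this]
  exact (PrimeSpectrum.isClosed_zeroLocus _).isOpen_compl
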